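/- arXiv:math/0702868 — 3 statements merged into one kernel-verified Lean document; each statement's English description precedes it below -/
import Mathlib

section
/- Finitely additive measure property of the q-Euler measure: let p be an odd prime, d an odd positive integer coprime to p, and define μ*_k(a + dp^N ℤ_p) := (-1)^a [dp^N]_q^k ([2]_q/[2]_{q^{dp^N}}) E_{k, q^{dp^N}}(a/(dp^N)), where E_{k,Q}(t) = (1+Q)(1-Q)^{-k} ∑_{l=0}^{k} (-1)^l C(k,l) Q^{tl}/(1+Q^l). Then for all 0 ≤ a < dp^N: ∑_{i=0}^{p-1} μ*_k(a + i·dp^N + dp^{N+1} ℤ_p) = μ*_k(a + dp^N ℤ_p). -/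
/-- The q-Euler polynomial `E_{k,Q}(t)` expressed through the element `Qt = Q^t`. -/
noncomputable def qEulerPolyAt {K : Type*} [Field K] (Q Qt : K) (k : ℕ) : K :=
  (1 + Q) * ((1 - Q)⁻¹) ^ k *
    ∑ l ∈ Finset.range (k + 1), (-1 : K) ^ l * (k.choose l : K) * Qt ^ l / (1 + Q ^ l)

/-- Finite additivity of the q-Euler measure
`μ*_k(a + dp^N ℤ_p) = (-1)^a [dp^N]_q^k ([2]_q/[2]_{q^{dp^N}}) E_{k,q^{dp^N}}(a/(dp^N))`
(note `(q^{dp^N})^{a/(dp^N)} = q^a`): for `0 ≤ a < dp^N`,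
`∑_{i=0}^{p-1} μ*_k(a + i dp^N + dp^{N+1} ℤ_p) = μ*_k(a + dp^N ℤ_p)`. -/
theorem qEuler_measure_additive {K : Type*} [Field K] [CharZero K]
    (q : K) (p d N k a : ℕ) (hp : Nat.Prime p) (hpo : Odd p)
    (hdo : Odd d) (hd0 : 0 < d) (hcop : Nat.Coprime d p)
    (hN : 1 ≤ N) (hk : 1 ≤ k) (ha : a < d * p ^ N)
    (hq : q ≠ 1) (hqj : ∀ j : ℕ, 1 ≤ j → q ^ j ≠ 1)
    (h2 : ∀ j : ℕ, 1 ≤ j → 1 + q ^ j ≠ 0) :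
    ∑ i ∈ Finset.range p,
        (-1 : K) ^ (a + i * (d * p ^ N)) * ((1 - q ^ (d * p ^ (N + 1))) / (1 - q)) ^ k *
          ((1 + q) / (1 + q ^ (d * p ^ (N + 1)))) *
            qEulerPolyAt (q ^ (d * p ^ (N + 1))) (q ^ (a + i * (d * p ^ N))) k
      = (-1 : K) ^ a * ((1 - q ^ (d * p ^ N)) / (1 - q)) ^ k *
          ((1 + q) / (1 + q ^ (d * p ^ N))) * qEulerPolyAt (q ^ (d * p ^ N)) (q ^ a) k := by
  have hp0 : 0 < p := hp.pos
  have hMrw : d * p ^ (N + 1) = d * p ^ N * p := by rw [pow_succ, mul_assoc]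
  rw [hMrw]
  set M := d * p ^ N with hMdef
  have hM : 0 < M := by positivity
  have hModd : Odd M := hdo.mul (hpo.pow)
  have h2' : ∀ j : ℕ, (1 : K) + q ^ j ≠ 0 := by
    intro j
    rcases Nat.eq_zero_or_pos j with h | h
    · subst h; norm_num
    · exact h2 j h
  have hq1 : (1 : K) - q ≠ 0 := fun h => hq (sub_eq_zero.mp h).symm
  have hQ : (1 : K) - q ^ M ≠ 0 := fun h => hqj M hM (sub_eq_zero.mp h).symm
  have hQp : (1 : K) - q ^ (M * p) ≠ 0 :=
    fun h => hqj (M * p) (Nat.mul_pos hM hp0) (sub_eq_zero.mp h).symm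
  have h2M : (1 : K) + q ^ M ≠ 0 := h2' M
  have h2Mp : (1 : K) + q ^ (M * p) ≠ 0 := h2' (M * p)
  -- key geometric sum : ∑_{i<p} (-1)^i (q^{Ml})^i = (1+q^{Mpl})/(1+q^{Ml})
  have key : ∀ l : ℕ, ∑ i ∈ Finset.range p, (-1 : K) ^ i * (q ^ (M * l)) ^ i
      = (1 + q ^ (M * p * l)) / (1 + q ^ (M * l)) := by
    intro l
    have hx : -(q ^ (M * l)) ≠ 1 := by
      intro h
      exact h2' (M * l) (by linear_combination -h)
    have hrw : M * p * l = (M * l) * p := by ring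
    calc ∑ i ∈ Finset.range p, (-1 : K) ^ i * (q ^ (M * l)) ^ i
        = ∑ i ∈ Finset.range p, (-(q ^ (M * l))) ^ i := by
          refine Finset.sum_congr rfl fun i _ => ?_
          rw [neg_pow]; ring
      _ = ((-(q ^ (M * l))) ^ p - 1) / ((-(q ^ (M * l))) - 1) := geom_sum_eq hx p
      _ = (1 + q ^ (M * p * l)) / (1 + q ^ (M * l)) := by
          rw [hpo.neg_pow, hrw, pow_mul q (M * l) p]
          rw [show -((q ^ (M * l)) ^ p) - 1 = -(1 + (q ^ (M * l)) ^ p) by ring,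
            show -(q ^ (M * l)) - 1 = -(1 + q ^ (M * l)) by ring, neg_div_neg_eq]
  -- per-term constant simplification
  have hterm : ∀ (s X S : K), 1 - X ≠ 0 → 1 + X ≠ 0 →
      s * ((1 - X) / (1 - q)) ^ k * ((1 + q) / (1 + X)) *
        ((1 + X) * ((1 - X)⁻¹) ^ k * S)
      = ((1 + q) * ((1 - q)⁻¹) ^ k) * (s * S) := by
    intro s X S h1 h2
    have e1 : (1 - X) ^ k * ((1 - X)⁻¹) ^ k = 1 := by rw [← mul_pow, mul_inv_cancel₀ h1, one_pow]
    have e2 : (1 + X) * (1 + X)⁻¹ = 1 := mul_inv_cancel₀ h2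
    have e : ((1 - X) ^ k * ((1 - X)⁻¹) ^ k) * ((1 + X) * (1 + X)⁻¹) = 1 := by rw [e1, e2, one_mul]
    rw [div_pow]
    linear_combination ((1 + q) * ((1 - q)⁻¹) ^ k * (s * S)) * e
  have hsign : ∀ i : ℕ, (-1 : K) ^ (a + i * M) = (-1) ^ a * (-1) ^ i := by
    intro i
    rw [pow_add, mul_comm i M, pow_mul, hModd.neg_one_pow]
  -- core identity
  have core : ∑ i ∈ Finset.range p, (-1 : K) ^ (a + i * M) *
        (∑ l ∈ Finset.range (k + 1),
          (-1 : K) ^ l * (k.choose l : K) * (q ^ (a + i * M)) ^ l / (1 + (q ^ (M * p)) ^ l))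
      = (-1 : K) ^ a * ∑ l ∈ Finset.range (k + 1),
          (-1 : K) ^ l * (k.choose l : K) * (q ^ a) ^ l / (1 + (q ^ M) ^ l) := by
    calc ∑ i ∈ Finset.range p, (-1 : K) ^ (a + i * M) *
          (∑ l ∈ Finset.range (k + 1),
            (-1 : K) ^ l * (k.choose l : K) * (q ^ (a + i * M)) ^ l / (1 + (q ^ (M * p)) ^ l))
        = ∑ i ∈ Finset.range p, ∑ l ∈ Finset.range (k + 1),
            ((-1 : K) ^ a * ((-1 : K) ^ l * (k.choose l : K) * q ^ (a * l) / (1 + q ^ (M * p * l)))) *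
              ((-1 : K) ^ i * (q ^ (M * l)) ^ i) := by
          refine Finset.sum_congr rfl fun i _ => ?_
          rw [Finset.mul_sum]
          refine Finset.sum_congr rfl fun l _ => ?_
          rw [hsign i, ← pow_mul q (a + i * M) l, ← pow_mul q (M * p) l,
            ← pow_mul q (M * l) i,
            show (a + i * M) * l = a * l + M * l * i by ring, pow_add]
          ring
      _ = ∑ l ∈ Finset.range (k + 1), ∑ i ∈ Finset.range p,
            ((-1 : K) ^ a * ((-1 : K) ^ l * (k.choose l : K) * q ^ (a * l) / (1 + q ^ (M * p * l)))) *
              ((-1 : K) ^ i * (q ^ (M * l)) ^ i) := Finset.sum_comm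
      _ = ∑ l ∈ Finset.range (k + 1),
            ((-1 : K) ^ a * ((-1 : K) ^ l * (k.choose l : K) * q ^ (a * l) / (1 + q ^ (M * p * l)))) *
              ((1 + q ^ (M * p * l)) / (1 + q ^ (M * l))) := by
          refine Finset.sum_congr rfl fun l _ => ?_
          rw [← Finset.mul_sum, key l]
      _ = (-1 : K) ^ a * ∑ l ∈ Finset.range (k + 1),
            (-1 : K) ^ l * (k.choose l : K) * (q ^ a) ^ l / (1 + (q ^ M) ^ l) := by
          rw [Finset.mul_sum]
          refine Finset.sum_congr rfl fun l _ => ?_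
          have hD : (1 : K) + q ^ (M * p * l) ≠ 0 := h2' (M * p * l)
          have hE : (1 : K) + q ^ (M * l) ≠ 0 := h2' (M * l)
          rw [← pow_mul q a l, ← pow_mul q M l]
          field_simp
  -- assemble
  simp only [qEulerPolyAt]
  calc ∑ i ∈ Finset.range p, (-1 : K) ^ (a + i * M) *
        ((1 - q ^ (M * p)) / (1 - q)) ^ k * ((1 + q) / (1 + q ^ (M * p))) *
        ((1 + q ^ (M * p)) * ((1 - q ^ (M * p))⁻¹) ^ k *
          ∑ l ∈ Finset.range (k + 1),
            (-1 : K) ^ l * (k.choose l : K) * (q ^ (a + i * M)) ^ l /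
              (1 + (q ^ (M * p)) ^ l))
      = ∑ i ∈ Finset.range p, ((1 + q) * ((1 - q)⁻¹) ^ k) *
          ((-1 : K) ^ (a + i * M) *
            ∑ l ∈ Finset.range (k + 1),
              (-1 : K) ^ l * (k.choose l : K) * (q ^ (a + i * M)) ^ l /
                (1 + (q ^ (M * p)) ^ l)) := by
        refine Finset.sum_congr rfl fun i _ => hterm _ _ _ hQp h2Mp
    _ = ((1 + q) * ((1 - q)⁻¹) ^ k) * ∑ i ∈ Finset.range p,
          (-1 : K) ^ (a + i * M) *
            ∑ l ∈ Finset.range (k + 1),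
              (-1 : K) ^ l * (k.choose l : K) * (q ^ (a + i * M)) ^ l /
                (1 + (q ^ (M * p)) ^ l) := by
        rw [← Finset.mul_sum]
    _ = ((1 + q) * ((1 - q)⁻¹) ^ k) * ((-1 : K) ^ a *
          ∑ l ∈ Finset.range (k + 1),
            (-1 : K) ^ l * (k.choose l : K) * (q ^ a) ^ l / (1 + (q ^ M) ^ l)) := by
        rw [core]
    _ = (-1 : K) ^ a * ((1 - q ^ M) / (1 - q)) ^ k * ((1 + q) / (1 + q ^ M)) *
          ((1 + q ^ M) * ((1 - q ^ M)⁻¹) ^ k *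
            ∑ l ∈ Finset.range (k + 1),
              (-1 : K) ^ l * (k.choose l : K) * (q ^ a) ^ l / (1 + (q ^ M) ^ l)) := by
        rw [hterm _ _ _ hQ h2M]
end

section
/- Let p be an odd prime, q ∈ ℂ_p with |q - 1|_p < p^{-1/(p-1)}, and k a positive integer. For odd d coprime to p and 0 ≤ a < dp^N, set μ*_k(a + dp^N ℤ_p) = (-1)^a [dp^N]_q^k ([2]_q/[2]_{q^{dp^N}}) E_{k,q^{dp^N}}(a/(dp^N)) with E_{k,Q}(t) = (1+Q)(1-Q)^{-k} ∑_{l=0}^{k} (-1)^l C(k,l) Q^{tl}/(1+Q^l) (Q^{tl} = exp(tl log Q)). Then as N → ∞, μ*_k(a + dp^N ℤ_p) converges to ((1+q)/2)·(-1)^a [a]_q^k, where [a]_q = (1-q^a)/(1-q). -/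
open Finset IsUltrametricDist Filter

section Aux

variable {K : Type*} [NontriviallyNormedField K] [IsUltrametricDist K]

lemma aux_norm_nat_coprime (p : ℕ) (hp : 1 < p) (hnp : ‖(p : K)‖ = (p : ℝ)⁻¹)
    (n : ℕ) (hc : Nat.Coprime n p) : ‖(n : K)‖ = 1 := by
  refine le_antisymm (norm_natCast_le_one K n) ?_
  by_contra h
  push_neg at h
  have hb := Nat.gcd_eq_gcd_ab n p
  rw [hc] at hb
  have hK : (1 : K) = (n : K) * (Nat.gcdA n p : K) + (p : K) * (Nat.gcdB n p : K) := by
    have := congrArg (fun z : ℤ => (z : K)) hb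
    push_cast at this
    simpa using this
  have hle : ‖(1 : K)‖ ≤ max (‖(n : K) * (Nat.gcdA n p : K)‖) (‖(p : K) * (Nat.gcdB n p : K)‖) := by
    rw [hK]; exact norm_add_le_max _ _
  have h2 : ‖(n : K) * (Nat.gcdA n p : K)‖ < 1 := by
    rw [norm_mul]
    calc ‖(n : K)‖ * ‖(Nat.gcdA n p : K)‖ ≤ ‖(n : K)‖ * 1 :=
          mul_le_mul_of_nonneg_left (norm_intCast_le_one K _) (norm_nonneg _)
      _ = ‖(n : K)‖ := mul_one _
      _ < 1 := h
  have h3 : ‖(p : K) * (Nat.gcdB n p : K)‖ < 1 := by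
    rw [norm_mul, hnp]
    have hp' : (1 : ℝ) < (p : ℝ) := by exact_mod_cast hp
    calc (p : ℝ)⁻¹ * ‖(Nat.gcdB n p : K)‖ ≤ (p : ℝ)⁻¹ * 1 :=
          mul_le_mul_of_nonneg_left (norm_intCast_le_one K _) (by positivity)
      _ = (p : ℝ)⁻¹ := mul_one _
      _ < 1 := by rw [inv_lt_one_iff₀]; right; exact hp'
  rw [norm_one] at hle
  rcases le_max_iff.mp hle with h' | h' <;> linarith

lemma aux_pow_sub_one_le (y : K) (hy : ‖y‖ ≤ 1) (n : ℕ) : ‖y ^ n - 1‖ ≤ ‖y - 1‖ := by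
  have h := geom_sum_mul y n
  calc ‖y ^ n - 1‖ = ‖(∑ i ∈ range n, y ^ i) * (y - 1)‖ := by rw [h]
    _ = ‖∑ i ∈ range n, y ^ i‖ * ‖y - 1‖ := norm_mul _ _
    _ ≤ 1 * ‖y - 1‖ := by
        refine mul_le_mul_of_nonneg_right ?_ (norm_nonneg _)
        refine norm_sum_le_of_forall_le_of_nonneg zero_le_one fun i _ => ?_
        rw [norm_pow]; exact pow_le_one₀ (norm_nonneg _) hy
    _ = ‖y - 1‖ := one_mul _

lemma aux_key (p : ℕ) (hp : Nat.Prime p) (hnp : ‖(p : K)‖ = (p : ℝ)⁻¹)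
    (y : K) (hy0 : y ≠ 1) (hy : ‖y - 1‖ < (p : ℝ) ^ (-1 / ((p : ℝ) - 1))) :
    ‖y ^ p - 1‖ = ‖y - 1‖ * (p : ℝ)⁻¹ := by
  set x := y - 1 with hx
  have hxne : x ≠ 0 := sub_ne_zero.mpr hy0
  have hxpos : 0 < ‖x‖ := norm_pos_iff.mpr hxne
  have hp2 : 2 ≤ p := hp.two_le
  have hp1 : (1 : ℝ) < (p : ℝ) := by exact_mod_cast hp.one_lt
  have hr1 : ((p : ℝ) ^ (-1 / ((p : ℝ) - 1))) ^ (p - 1) = (p : ℝ)⁻¹ := by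
    rw [← Real.rpow_natCast ((p : ℝ) ^ (-1 / ((p : ℝ) - 1))) (p - 1),
      ← Real.rpow_mul (by positivity)]
    have hcast : ((p - 1 : ℕ) : ℝ) = (p : ℝ) - 1 := by
      push_cast [Nat.cast_sub hp.one_lt.le]; ring
    rw [hcast]
    have hne : (p : ℝ) - 1 ≠ 0 := by linarith
    rw [div_mul_cancel₀ _ hne, Real.rpow_neg_one]
  have hxlt1 : ‖x‖ < 1 :=
    hy.trans_le (Real.rpow_le_one_of_one_le_of_nonpos hp1.le (by
      rw [div_nonpos_iff]; right; constructor <;> linarith))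
  have hexp : y ^ p = ∑ i ∈ range (p + 1), x ^ i * (p.choose i : K) := by
    have hy' : y = x + 1 := by rw [hx]; ring
    rw [hy', add_pow]
    simp
  set T : K := ∑ i ∈ range (p - 1), x ^ (i + 2) * (p.choose (i + 2) : K) with hT
  have hsplit : y ^ p - 1 = (p : K) * x + T := by
    rw [hexp, Finset.sum_range_succ']
    have hpp : p = (p - 1) + 1 := by omega
    rw [hpp, Finset.sum_range_succ', ← hpp]
    simp [hT]
    ring
  have hTbound : ‖T‖ < ‖x‖ * (p : ℝ)⁻¹ := by
    have hC : ∀ i ∈ range (p - 1), ‖x ^ (i + 2) * (p.choose (i + 2) : K)‖ ≤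
        max (‖x‖ ^ p) (‖x‖ ^ 2 * (p : ℝ)⁻¹) := by
      intro i hi
      rw [mem_range] at hi
      rcases eq_or_lt_of_le (by omega : i + 2 ≤ p) with heq | hlt
      · have : p.choose (i + 2) = 1 := by rw [heq]; exact Nat.choose_self p
        rw [this]
        simp only [Nat.cast_one, mul_one, norm_pow, heq]
        exact le_max_left _ _
      · have hdvd : p ∣ p.choose (i + 2) := hp.dvd_choose_self (by omega) hlt
        obtain ⟨m, hm⟩ := hdvd
        refine le_max_of_le_right ?_
        rw [hm, norm_mul, norm_pow]
        push_cast
        rw [norm_mul, hnp]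
        have h1 : ‖x‖ ^ (i + 2) ≤ ‖x‖ ^ 2 :=
          pow_le_pow_of_le_one (norm_nonneg _) hxlt1.le (by omega)
        have h2 : (p : ℝ)⁻¹ * ‖(m : K)‖ ≤ (p : ℝ)⁻¹ * 1 :=
          mul_le_mul_of_nonneg_left (norm_natCast_le_one K m) (by positivity)
        calc ‖x‖ ^ (i + 2) * ((p : ℝ)⁻¹ * ‖(m : K)‖) ≤ ‖x‖ ^ 2 * ((p : ℝ)⁻¹ * 1) :=
              mul_le_mul h1 h2 (by positivity) (by positivity)
          _ = ‖x‖ ^ 2 * (p : ℝ)⁻¹ := by ring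
    have hTle : ‖T‖ ≤ max (‖x‖ ^ p) (‖x‖ ^ 2 * (p : ℝ)⁻¹) :=
      norm_sum_le_of_forall_le_of_nonneg (le_max_of_le_right (by positivity)) hC
    refine hTle.trans_lt (max_lt ?_ ?_)
    · have hple : ‖x‖ ^ p = ‖x‖ * ‖x‖ ^ (p - 1) := by
        rw [← pow_succ']
        congr 1
        omega
      rw [hple]
      refine mul_lt_mul_of_pos_left ?_ hxpos
      calc ‖x‖ ^ (p - 1) < ((p : ℝ) ^ (-1 / ((p : ℝ) - 1))) ^ (p - 1) :=
            pow_lt_pow_left₀ hy (norm_nonneg _) (by omega)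
        _ = (p : ℝ)⁻¹ := hr1
    · have : ‖x‖ ^ 2 < ‖x‖ := by nlinarith
      exact mul_lt_mul_of_pos_right this (by positivity)
  have hpx : ‖(p : K) * x‖ = ‖x‖ * (p : ℝ)⁻¹ := by
    rw [norm_mul, hnp]; ring
  rw [hsplit, norm_add_eq_max_of_norm_ne_norm (by rw [hpx]; exact fun h => absurd h.symm hTbound.ne),
    hpx, max_eq_left (by rw [hpx] at *; exact hTbound.le)]

end Aux

/-- In a complete ultrametric field modeling `ℂ_p` (odd prime `p`, `‖p‖ = 1/p`),
for `‖q-1‖ < p^{-1/(p-1)}`, `k ≥ 1`, `d` odd coprime to `p`, the q-Euler measure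
`μ*_k(a + dp^N ℤ_p) = (-1)^a [dp^N]_q^k ([2]_q/[2]_{q^{dp^N}}) E_{k,q^{dp^N}}(a/(dp^N))`
(with `(q^{dp^N})^{a/(dp^N)} = q^a`) converges, as `N → ∞`, to
`((1+q)/2) (-1)^a [a]_q^k`. -/
theorem qEuler_measure_limit {K : Type*} [NontriviallyNormedField K]
    [CompleteSpace K] [CharZero K] [IsUltrametricDist K]
    (p : ℕ) (hp : Nat.Prime p) (hpo : Odd p) (hnp : ‖(p : K)‖ = (p : ℝ)⁻¹)
    (q : K) (hq : ‖q - 1‖ < (p : ℝ) ^ (-1 / ((p : ℝ) - 1)))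
    (k : ℕ) (hk : 1 ≤ k) (d : ℕ) (hdo : Odd d) (hd0 : 0 < d)
    (hcop : Nat.Coprime d p) (a : ℕ) :
    Filter.Tendsto
      (fun N : ℕ =>
        (-1 : K) ^ a * ((1 - q ^ (d * p ^ N)) / (1 - q)) ^ k *
          ((1 + q) / (1 + q ^ (d * p ^ N))) * qEulerPolyAt (q ^ (d * p ^ N)) (q ^ a) k)
      Filter.atTop
      (nhds (((1 + q) / 2) * (-1 : K) ^ a * ((1 - q ^ a) / (1 - q)) ^ k)) := by
  have hk0 : k ≠ 0 := by omega
  by_cases hq1 : q = 1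
  · subst hq1
    simp only [one_pow, sub_self, zero_div, zero_pow hk0, mul_zero, zero_mul]
    exact tendsto_const_nhds
  have hq1' : (1 : K) - q ≠ 0 := fun h => hq1 (by linear_combination -h)
  have hp1 : (1 : ℝ) < (p : ℝ) := by exact_mod_cast hp.one_lt
  have hr1le : ((p : ℝ) ^ (-1 / ((p : ℝ) - 1))) ≤ 1 :=
    Real.rpow_le_one_of_one_le_of_nonpos hp1.le (by
      rw [div_nonpos_iff]; right; constructor <;> linarith)
  have hqn1 : ‖q - 1‖ < 1 := hq.trans_le hr1le
  have hqnpos : 0 < ‖q - 1‖ := norm_pos_iff.mpr (sub_ne_zero.mpr hq1)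
  have hqle1 : ‖q‖ ≤ 1 := by
    have : q = (q - 1) + 1 := by ring
    rw [this]
    exact (norm_add_le_max _ _).trans (by rw [norm_one]; exact max_le hqn1.le le_rfl)
  have hinvlt : (p : ℝ)⁻¹ < 1 := by rw [inv_lt_one_iff₀]; right; exact hp1
  have hinvnn : (0:ℝ) ≤ (p : ℝ)⁻¹ := by positivity
  -- norm of q^(p^N) - 1
  have hB : ∀ N : ℕ, ‖q ^ (p ^ N) - 1‖ = ‖q - 1‖ * ((p : ℝ)⁻¹) ^ N := by
    intro N
    induction N with
    | zero => simp
    | succ N ih =>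
      have hsmall : ((p : ℝ)⁻¹) ^ N ≤ 1 := pow_le_one₀ hinvnn hinvlt.le
      have hylt : ‖q ^ (p ^ N) - 1‖ < (p : ℝ) ^ (-1 / ((p : ℝ) - 1)) := by
        rw [ih]
        calc ‖q - 1‖ * ((p : ℝ)⁻¹) ^ N ≤ ‖q - 1‖ * 1 :=
              mul_le_mul_of_nonneg_left hsmall (norm_nonneg _)
          _ = ‖q - 1‖ := mul_one _
          _ < _ := hq
      have hyne : q ^ (p ^ N) ≠ 1 := by
        intro h
        rw [h, sub_self, norm_zero] at ih
        have : (0:ℝ) < ‖q - 1‖ * ((p : ℝ)⁻¹) ^ N := by positivity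
        linarith [ih ▸ this]
      have hstep := aux_key p hp hnp (q ^ (p ^ N)) hyne hylt
      rw [pow_succ, pow_mul, hstep, ih]
      ring
  -- geometric sum has norm 1
  have hGeom : ∀ N : ℕ, ‖∑ i ∈ range d, (q ^ (p ^ N)) ^ i‖ = 1 := by
    intro N
    set y := q ^ (p ^ N) with hy
    have hyle : ‖y‖ ≤ 1 := by rw [hy, norm_pow]; exact pow_le_one₀ (norm_nonneg _) hqle1
    have hylt1 : ‖y - 1‖ < 1 := by
      rw [hy, hB]
      calc ‖q - 1‖ * ((p : ℝ)⁻¹) ^ N ≤ ‖q - 1‖ * 1 :=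
            mul_le_mul_of_nonneg_left (pow_le_one₀ hinvnn hinvlt.le) (norm_nonneg _)
        _ = ‖q - 1‖ := mul_one _
        _ < 1 := hqn1
    have hd1 : ‖(d : K)‖ = 1 := aux_norm_nat_coprime p hp.one_lt hnp d hcop
    have hrw : ∑ i ∈ range d, y ^ i = (d : K) + ∑ i ∈ range d, (y ^ i - 1) := by
      rw [Finset.sum_sub_distrib]
      simp [Finset.card_range]
    have hrest : ‖∑ i ∈ range d, (y ^ i - 1)‖ < 1 := by
      refine lt_of_le_of_lt (norm_sum_le_of_forall_le_of_nonneg (norm_nonneg (y-1))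
        fun i _ => aux_pow_sub_one_le y hyle i) hylt1
    rw [hrw, norm_add_eq_max_of_norm_ne_norm (by rw [hd1]; exact fun h => absurd h.symm hrest.ne),
      hd1, max_eq_left (by linarith)]
  -- norm of q^(d p^N) - 1
  have hQn : ∀ N : ℕ, ‖q ^ (d * p ^ N) - 1‖ = ‖q - 1‖ * ((p : ℝ)⁻¹) ^ N := by
    intro N
    have hrw : q ^ (d * p ^ N) = (q ^ (p ^ N)) ^ d := by
      rw [← pow_mul, mul_comm]
    rw [hrw, ← geom_sum_mul, norm_mul, hGeom, one_mul, hB]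
  have hQne1 : ∀ N : ℕ, q ^ (d * p ^ N) ≠ 1 := by
    intro N h
    have := hQn N
    rw [h, sub_self, norm_zero] at this
    have h2 : (0:ℝ) < ‖q - 1‖ * ((p : ℝ)⁻¹) ^ N := by positivity
    linarith [this ▸ h2]
  have hQsmall : ∀ N : ℕ, ‖q ^ (d * p ^ N) - 1‖ < 1 := by
    intro N
    rw [hQn]
    calc ‖q - 1‖ * ((p : ℝ)⁻¹) ^ N ≤ ‖q - 1‖ * 1 :=
          mul_le_mul_of_nonneg_left (pow_le_one₀ hinvnn hinvlt.le) (norm_nonneg _)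
      _ = ‖q - 1‖ := mul_one _
      _ < 1 := hqn1
  have hQne2 : ∀ N : ℕ, (1 : K) + q ^ (d * p ^ N) ≠ 0 := by
    intro N
    have h2 : ‖(2 : K)‖ = 1 := by
      have := aux_norm_nat_coprime p hp.one_lt hnp 2
        ((Nat.coprime_two_left).mpr hpo)
      simpa using this
    have hrw : (1 : K) + q ^ (d * p ^ N) = (2 : K) + (q ^ (d * p ^ N) - 1) := by ring
    intro h
    have : ‖(1 : K) + q ^ (d * p ^ N)‖ = 1 := by
      rw [hrw, norm_add_eq_max_of_norm_ne_norm (by rw [h2]; exact fun hh => absurd hh.symm (hQsmall N).ne),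
        h2, max_eq_left (by linarith [hQsmall N])]
    rw [h, norm_zero] at this
    linarith
  -- tendsto q^(d p^N) → 1
  have hTend : Filter.Tendsto (fun N : ℕ => q ^ (d * p ^ N)) Filter.atTop (nhds 1) := by
    have h0 : Filter.Tendsto (fun N : ℕ => q ^ (d * p ^ N) - 1) Filter.atTop (nhds 0) := by
      rw [tendsto_zero_iff_norm_tendsto_zero]
      have := (tendsto_pow_atTop_nhds_zero_of_lt_one hinvnn hinvlt).const_mul ‖q - 1‖
      rw [mul_zero] at this
      exact this.congr fun N => (hQn N).symm
    have := h0.add_const 1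
    rw [zero_add] at this
    exact this.congr fun N => by ring
  -- the continuous sum function
  set g : K → K := fun Q => ∑ l ∈ range (k + 1), (-1 : K) ^ l * (k.choose l : K) * (q ^ a) ^ l / (1 + Q ^ l)
    with hg
  have hgTend : Filter.Tendsto (fun N : ℕ => g (q ^ (d * p ^ N))) Filter.atTop (nhds (g 1)) := by
    simp only [hg]
    refine tendsto_finset_sum _ fun l _ => Filter.Tendsto.div tendsto_const_nhds
      (((hTend.pow l).const_add 1)) ?_
    simp only [one_pow]
    norm_num
  have hg1 : g 1 = (1 - q ^ a) ^ k / 2 := by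
    have hsum : (1 - q ^ a) ^ k = ∑ l ∈ range (k + 1), (-1 : K) ^ l * (k.choose l : K) * (q ^ a) ^ l := by
      rw [sub_eq_add_neg, add_comm, add_pow]
      refine Finset.sum_congr rfl fun l _ => ?_
      rw [neg_pow]
      ring
    rw [hg]
    simp only [one_pow]
    rw [← Finset.sum_div, hsum]
    norm_num
  set C0 : K := (-1 : K) ^ a * (1 + q) * ((1 - q)⁻¹) ^ k with hC0
  have hpoint : ∀ N : ℕ,
      (-1 : K) ^ a * ((1 - q ^ (d * p ^ N)) / (1 - q)) ^ k *
        ((1 + q) / (1 + q ^ (d * p ^ N))) * qEulerPolyAt (q ^ (d * p ^ N)) (q ^ a) k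
      = C0 * g (q ^ (d * p ^ N)) := by
    intro N
    have h1 : (1 : K) - q ^ (d * p ^ N) ≠ 0 := sub_ne_zero.mpr (Ne.symm (hQne1 N))
    have h2 := hQne2 N
    rw [qEulerPolyAt, hC0]
    simp only [hg]
    generalize (∑ l ∈ range (k + 1), (-1 : K) ^ l * (k.choose l : K) * (q ^ a) ^ l / (1 + (q ^ (d * p ^ N)) ^ l)) = S
    simp only [div_pow, inv_pow]
    field_simp [h1, h2, hq1']
  have hval : C0 * g 1 = ((1 + q) / 2) * (-1 : K) ^ a * ((1 - q ^ a) / (1 - q)) ^ k := by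
    rw [hg1, hC0]
    simp only [div_pow, inv_pow]
    field_simp
  rw [← hval]
  exact (hgTend.const_mul C0).congr fun N => (hpoint N).symm
end

section
/- Boundedness of the q-Euler measure: with notation as above (p odd prime, q ∈ ℂ_p, |q-1|_p < p^{-1/(p-1)}, k a positive integer, d odd coprime to p), there exists a constant M such that for all N ≥ 1 and all 0 ≤ a < dp^N, |μ*_k(a + dp^N ℤ_p)|_p ≤ M, where μ*_k(a + dp^N ℤ_p) = (-1)^a [dp^N]_q^k ([2]_q/[2]_{q^{dp^N}}) E_{k,q^{dp^N}}(a/(dp^N)). -/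
/-- Boundedness of the q-Euler measure: in a complete ultrametric field modeling
`ℂ_p` (odd prime `p`, `‖p‖ = 1/p`), for `‖q-1‖ < p^{-1/(p-1)}`, `k ≥ 1`, `d` odd
coprime to `p`, there is a constant `M` with
`‖μ*_k(a + dp^N ℤ_p)‖ ≤ M` for all `N ≥ 1` and `0 ≤ a < dp^N`, where
`μ*_k(a + dp^N ℤ_p) = (-1)^a [dp^N]_q^k ([2]_q/[2]_{q^{dp^N}}) E_{k,q^{dp^N}}(a/(dp^N))`. -/
theorem qEuler_measure_bounded {K : Type*} [NontriviallyNormedField K]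
    [CompleteSpace K] [CharZero K] [IsUltrametricDist K]
    (p : ℕ) (hp : Nat.Prime p) (hpo : Odd p) (hnp : ‖(p : K)‖ = (p : ℝ)⁻¹)
    (q : K) (hq : ‖q - 1‖ < (p : ℝ) ^ (-1 / ((p : ℝ) - 1)))
    (k : ℕ) (hk : 1 ≤ k) (d : ℕ) (hdo : Odd d) (hd0 : 0 < d)
    (hcop : Nat.Coprime d p) :
    ∃ M : ℝ, ∀ N : ℕ, 1 ≤ N → ∀ a : ℕ, a < d * p ^ N →
      ‖(-1 : K) ^ a * ((1 - q ^ (d * p ^ N)) / (1 - q)) ^ k *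
          ((1 + q) / (1 + q ^ (d * p ^ N))) *
            qEulerPolyAt (q ^ (d * p ^ N)) (q ^ a) k‖ ≤ M := by
  have hp1 : (1:ℝ) < (p:ℝ) := by exact_mod_cast hp.one_lt
  have hr1 : (p:ℝ) ^ (-1 / ((p:ℝ) - 1)) ≤ 1 :=
    Real.rpow_le_one_of_one_le_of_nonpos hp1.le
      (div_nonpos_of_nonpos_of_nonneg (by norm_num) (by linarith))
  have hq1 : ‖q - 1‖ < 1 := lt_of_lt_of_le hq hr1
  have hqn : ‖q‖ ≤ 1 := by
    have h := IsUltrametricDist.norm_add_le_max (q - 1) 1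
    rw [sub_add_cancel, norm_one] at h
    exact h.trans (max_le hq1.le le_rfl)
  have hpow : ∀ j : ℕ, ‖q ^ j - 1‖ < 1 := by
    intro j
    have hg : q ^ j - 1 = (∑ i ∈ Finset.range j, q ^ i) * (q - 1) := (geom_sum_mul q j).symm
    rw [hg, norm_mul]
    calc ‖∑ i ∈ Finset.range j, q ^ i‖ * ‖q - 1‖ ≤ 1 * ‖q - 1‖ := by
          apply mul_le_mul_of_nonneg_right _ (norm_nonneg _)
          apply IsUltrametricDist.norm_sum_le_of_forall_le_of_nonneg zero_le_one
          intro i _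
          rw [norm_pow]
          exact pow_le_one₀ (norm_nonneg _) hqn
      _ = ‖q - 1‖ := one_mul _
      _ < 1 := hq1
  have h2 : ‖(2:K)‖ = 1 := by
    refine le_antisymm ?_ ?_
    · have := IsUltrametricDist.norm_natCast_le_one K 2
      simpa using this
    · by_contra hlt
      push_neg at hlt
      obtain ⟨c, hc⟩ := hpo
      have hpK : (p:K) = 2 * (c:K) + 1 := by exact_mod_cast congrArg (Nat.cast (R := K)) hc
      have hcast : (1:K) = (p:K) + -(2 * (c:K)) := by rw [hpK]; ring
      have hb := IsUltrametricDist.norm_add_le_max ((p:K)) (-(2 * (c:K)))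
      rw [← hcast, norm_one, norm_neg] at hb
      have hpl : ‖(p:K)‖ < 1 := by
        rw [hnp]; exact inv_lt_one_of_one_lt₀ hp1
      have h2c : ‖(2:K) * (c:K)‖ < 1 := by
        rw [norm_mul]
        calc ‖(2:K)‖ * ‖(c:K)‖ ≤ ‖(2:K)‖ * 1 :=
              mul_le_mul_of_nonneg_left (IsUltrametricDist.norm_natCast_le_one K c) (norm_nonneg _)
          _ = ‖(2:K)‖ := mul_one _
          _ < 1 := hlt
      have := max_lt hpl h2c
      linarith
  have hden : ∀ j : ℕ, ‖(1:K) + q ^ j‖ = 1 := by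
    intro j
    have he : (1:K) + q ^ j = (q ^ j - 1) + 2 := by ring
    have hne : ‖q ^ j - 1‖ ≠ ‖(2:K)‖ := by rw [h2]; exact ne_of_lt (hpow j)
    rw [he, IsUltrametricDist.norm_add_eq_max_of_norm_ne_norm hne, h2,
      max_eq_right (hpow j).le]
  have hdne : ∀ j : ℕ, (1:K) + q ^ j ≠ 0 := by
    intro j h
    have := hden j
    rw [h, norm_zero] at this
    norm_num at this
  refine ⟨‖(1 - q)⁻¹‖ ^ k, ?_⟩
  intro N hN a ha
  set m := d * p ^ N with hm
  set S : K := ∑ l ∈ Finset.range (k + 1),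
      (-1 : K) ^ l * (k.choose l : K) * (q ^ a) ^ l / (1 + (q ^ m) ^ l) with hSdef
  have hS : ‖S‖ ≤ 1 := by
    rw [hSdef]
    apply IsUltrametricDist.norm_sum_le_of_forall_le_of_nonneg zero_le_one
    intro l _
    have hml : ((q ^ m) ^ l) = q ^ (m * l) := (pow_mul q m l).symm
    rw [norm_div, hml, hden (m * l), div_one, norm_mul, norm_mul, norm_pow, norm_pow,
      norm_pow, norm_neg, norm_one, one_pow, one_mul]
    calc ‖((k.choose l : ℕ) : K)‖ * (‖q‖ ^ a) ^ l ≤ 1 * 1 := by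
          apply mul_le_mul (IsUltrametricDist.norm_natCast_le_one K _)
            (pow_le_one₀ (pow_nonneg (norm_nonneg _) _) (pow_le_one₀ (norm_nonneg _) hqn))
            (by positivity) zero_le_one
      _ = 1 := by norm_num
  have hq1' : ‖(1:K) + q‖ = 1 := by simpa using hden 1
  have hk0 : k ≠ 0 := Nat.one_le_iff_ne_zero.mp hk
  by_cases hq0 : q = 1
  · subst hq0
    simp only [one_pow, sub_self, zero_div, zero_pow hk0, mul_zero, zero_mul, norm_zero]
    positivity
  by_cases hm0 : q ^ m = 1
  · rw [hm0]
    simp only [sub_self, zero_div, zero_pow hk0, mul_zero, zero_mul, norm_zero]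
    positivity
  · have hA : (1:K) - q ^ m ≠ 0 := sub_ne_zero.mpr fun h => hm0 h.symm
    have hB : (1:K) + q ^ m ≠ 0 := hdne m
    have hC : (1:K) - q ≠ 0 := sub_ne_zero.mpr fun h => hq0 h.symm
    have key : (-1 : K) ^ a * ((1 - q ^ m) / (1 - q)) ^ k *
          ((1 + q) / (1 + q ^ m)) * qEulerPolyAt (q ^ m) (q ^ a) k
        = (-1 : K) ^ a * ((1 + q) * (((1 - q)⁻¹) ^ k * S)) := by
      simp only [qEulerPolyAt, ← hSdef]
      field_simp
      have hX : (1 - q ^ m)⁻¹ ^ k * (-(q ^ m * (1 - q)⁻¹) + (1 - q)⁻¹) ^ k = (1 - q)⁻¹ ^ k := by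
        rw [← mul_pow]; congr 1; rw [inv_mul_eq_iff_eq_mul₀ hA]; ring
      linear_combination (q * S + S) * hX
    rw [key, norm_mul, norm_mul, norm_mul, norm_pow, norm_neg, norm_one, one_pow,
      one_mul, hq1', one_mul, norm_pow]
    exact mul_le_of_le_one_right (by positivity) hS
end
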